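/- Let n ≥ 2. For every integer k ≥ 1 and all z ∈ ℂⁿ, Z̃₁^* φ_k^{n−1}(z) = −(1/2) z₁ φ_{k−1}^{n}(z), and Z̃₁^* φ_0^{n−1} ≡ 0; moreover for every integer k ≥ 0 and all z ∈ ℂⁿ, Z̃₂ φ_k^{n−1}(z) = −(1/2) \overline{z_2} φ_k^{n}(z). -/

import Mathlib

open MeasureTheory Complex Finset Metric

noncomputable section

/-- `ℂⁿ` as a Euclidean space. -/
abbrev Cn (n : ℕ) := EuclideanSpace ℂ (Fin n)

instance (n : ℕ) : MeasurableSpace (Cn n) := WithLp.measurableSpace 2 (Fin n → ℂ)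
instance (n : ℕ) : BorelSpace (Cn n) := PiLp.borelSpace 2
instance (n : ℕ) : MeasureSpace (Cn n) :=
  { volume := Measure.map (WithLp.toLp 2) (volume : Measure (Fin n → ℂ)) }

/-- The Laguerre polynomial of degree `k` and order `α`:
`L_k^α(x) = Σ_{i=0}^k (−1)^i ((α+k)!/((k−i)!(α+i)! i!)) x^i`. -/
def laguerreL (k α : ℕ) (x : ℝ) : ℝ :=
  ∑ i ∈ Finset.range (k + 1),
    (-1 : ℝ) ^ i * ((α + k).factorial : ℝ) /
      (((k - i).factorial : ℝ) * ((α + i).factorial : ℝ) * (i.factorial : ℝ)) * x ^ i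

/-- The Laguerre function `φ_k^ν(z) = L_k^ν(|z|²/2) e^{−|z|²/4}` on `ℂⁿ`. -/
def phiFn (n k ν : ℕ) (z : Cn n) : ℂ :=
  ((laguerreL k ν (‖z‖ ^ 2 / 2) * Real.exp (-‖z‖ ^ 2 / 4) : ℝ) : ℂ)

/-- The radial profile `φ_k^ν(r) = L_k^ν(r²/2) e^{−r²/4}`. -/
def phiRad (k ν : ℕ) (r : ℝ) : ℝ :=
  laguerreL k ν (r ^ 2 / 2) * Real.exp (-r ^ 2 / 4)

/-- Directional derivative `∂/∂x_j`. -/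
def pdx (n : ℕ) (j : Fin n) (f : Cn n → ℂ) (z : Cn n) : ℂ :=
  fderiv ℝ f z (EuclideanSpace.single j 1)

/-- Directional derivative `∂/∂y_j`. -/
def pdy (n : ℕ) (j : Fin n) (f : Cn n → ℂ) (z : Cn n) : ℂ :=
  fderiv ℝ f z (EuclideanSpace.single j Complex.I)

/-- The operator `Z̃_j = ∂/∂z_j − (1/4) z̄_j`, where
`∂/∂z_j = (1/2)(∂/∂x_j − i ∂/∂y_j)`. -/
def Zt (n : ℕ) (j : Fin n) (f : Cn n → ℂ) : Cn n → ℂ := fun z =>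
  (1 / 2 : ℂ) * (pdx n j f z - Complex.I * pdy n j f z) -
    (1 / 4 : ℂ) * (starRingEnd ℂ) (z j) * f z

/-- The operator `Z̃_j^* = ∂/∂z̄_j + (1/4) z_j`, where
`∂/∂z̄_j = (1/2)(∂/∂x_j + i ∂/∂y_j)`. -/
def ZtStar (n : ℕ) (j : Fin n) (f : Cn n → ℂ) : Cn n → ℂ := fun z =>
  (1 / 2 : ℂ) * (pdx n j f z + Complex.I * pdy n j f z) +
    (1 / 4 : ℂ) * z j * f z

/-- The polynomial `P(z) = Σ_{|α|=p, |β|=q} c_{αβ} z^α z̄^β` on `ℂⁿ`. -/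
def bigraded (n p q : ℕ) (c : (Fin n → ℕ) → (Fin n → ℕ) → ℂ) (z : Cn n) : ℂ :=
  ∑ α ∈ Finset.Nat.antidiagonalTuple n p, ∑ β ∈ Finset.Nat.antidiagonalTuple n q,
    c α β * (∏ j, z j ^ α j) * (∏ j, (starRingEnd ℂ) (z j) ^ β j)

/-- The Laplacian on `ℝ^{2n} ≅ ℂⁿ`. -/
def lap (n : ℕ) (f : Cn n → ℂ) (z : Cn n) : ℂ :=
  ∑ j : Fin n,
    (fderiv ℝ (fun w => fderiv ℝ f w (EuclideanSpace.single j 1)) z (EuclideanSpace.single j 1) +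
      fderiv ℝ (fun w => fderiv ℝ f w (EuclideanSpace.single j Complex.I)) z
        (EuclideanSpace.single j Complex.I))

/-- The twisted convolution `f × g(z) = ∫ f(z−w) g(w) e^{(i/2) Im(z·w̄)} dw`. -/
def twConv (n : ℕ) (f g : Cn n → ℂ) (z : Cn n) : ℂ :=
  ∫ w : Cn n,
    f (z - w) * g w *
      Complex.exp (Complex.I / 2 * (((∑ j, z j * (starRingEnd ℂ) (w j)).im : ℝ) : ℂ))

/-- The normalized surface measure `μ_r` on the sphere of radius `r` centered at the
origin, realized as the pushforward of the normalized surface measure of the unit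
sphere under scaling by `r`. -/
def muSph (n : ℕ) (r : ℝ) : Measure (Cn n) :=
  ((volume : Measure (Cn n)).toSphere Set.univ)⁻¹ •
    Measure.map (fun ω : sphere (0 : Cn n) 1 => r • (ω : Cn n))
      (volume : Measure (Cn n)).toSphere

/-- The weighted twisted spherical mean
`f × gμ_r(z) = ∫_{S_r(o)} f(z−w) g(w) e^{(i/2) Im(z·w̄)} dμ_r(w)`. -/
def twSphMean (n : ℕ) (f g : Cn n → ℂ) (r : ℝ) (z : Cn n) : ℂ :=
  ∫ w,
    f (z - w) * g w *
      Complex.exp (Complex.I / 2 * (((∑ j, z j * (starRingEnd ℂ) (w j)).im : ℝ) : ℂ))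
      ∂(muSph n r)

/-- The twisted spherical mean `f × μ_r(z) = ∫_{S_r(o)} f(z−w) e^{(i/2) Im(z·w̄)} dμ_r(w)`. -/
def tsMean (n : ℕ) (f : Cn n → ℂ) (r : ℝ) (z : Cn n) : ℂ :=
  ∫ w,
    f (z - w) *
      Complex.exp (Complex.I / 2 * (((∑ j, z j * (starRingEnd ℂ) (w j)).im : ℝ) : ℂ))
      ∂(muSph n r)

/-- Ordered product of iterated operators: `(T_1)^{α_1} ∘ ⋯ ∘ (T_n)^{α_n}`. -/
def multiOp (n : ℕ) (T : Fin n → (Cn n → ℂ) → Cn n → ℂ) (α : Fin n → ℕ) :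
    (Cn n → ℂ) → Cn n → ℂ :=
  (List.ofFn fun j : Fin n => (T j)^[α j]).foldr (· ∘ ·) id

/-- The operator `P(A) = Σ c_{αβ} (A^*)^α A^β` attached to a bigraded polynomial. -/
def polyOp (n p q : ℕ) (c : (Fin n → ℕ) → (Fin n → ℕ) → ℂ)
    (Astar A : Fin n → (Cn n → ℂ) → Cn n → ℂ) (f : Cn n → ℂ) (z : Cn n) : ℂ :=
  ∑ α ∈ Finset.Nat.antidiagonalTuple n p, ∑ β ∈ Finset.Nat.antidiagonalTuple n q,
    c α β * multiOp n Astar α (multiOp n A β f) z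


section Aux

lemma laguerreL_zero' (α : ℕ) (x : ℝ) : laguerreL 0 α x = 1 := by
  simp [laguerreL, Nat.factorial_ne_zero]

lemma lagDeriv (k α : ℕ) (x : ℝ) :
    HasDerivAt (laguerreL (k+1) α) (-(laguerreL k (α+1) x)) x := by
  have h : HasDerivAt (laguerreL (k+1) α)
      (∑ i ∈ Finset.range (k+2),
        (-1 : ℝ) ^ i * ((α + (k+1)).factorial : ℝ) /
          ((((k+1) - i).factorial : ℝ) * ((α + i).factorial : ℝ) * (i.factorial : ℝ)) *
          (i * x ^ (i-1))) x := by
    unfold laguerreL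
    apply HasDerivAt.fun_sum
    intro i _
    simpa using (hasDerivAt_pow i x).const_mul
      ((-1 : ℝ) ^ i * ((α + (k+1)).factorial : ℝ) /
        ((((k+1) - i).factorial : ℝ) * ((α + i).factorial : ℝ) * (i.factorial : ℝ)))
  convert h using 1
  rw [Finset.sum_range_succ' _ (k+1)]
  simp only [Nat.cast_zero, pow_zero, zero_mul, mul_zero, add_zero]
  rw [laguerreL, ← Finset.sum_neg_distrib]
  apply Finset.sum_congr rfl
  intro i hi
  have hik : i ≤ k := by simpa using Nat.lt_succ_iff.mp (Finset.mem_range.mp hi)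
  obtain ⟨c, rfl⟩ : ∃ c, k = i + c := ⟨k - i, by omega⟩
  have h1 : i + c - i = c := by omega
  have h2 : i + c + 1 - (i + 1) = c := by omega
  have h3 : α + (i + c + 1) = (α + 1) + (i + c) := by omega
  have h4 : α + (i + 1) = (α + i) + 1 := by omega
  have h5 : (α + 1) + i = (α + i) + 1 := by omega
  have h6 : i + 1 - 1 = i := by omega
  rw [h1, h2, h3, h4, h5, h6]
  rw [pow_succ, Nat.factorial_succ (α + i), Nat.factorial_succ i]
  push_cast
  have hc : ((c.factorial : ℝ)) ≠ 0 := Nat.cast_ne_zero.mpr (Nat.factorial_ne_zero c)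
  have hai : (((α+i).factorial : ℝ)) ≠ 0 := Nat.cast_ne_zero.mpr (Nat.factorial_ne_zero _)
  have hi' : ((i.factorial : ℝ)) ≠ 0 := Nat.cast_ne_zero.mpr (Nat.factorial_ne_zero _)
  have hai1 : ((α:ℝ) + i + 1) ≠ 0 := by positivity
  have hi1 : ((i:ℝ) + 1) ≠ 0 := by positivity
  field_simp

lemma lagStep (k α : ℕ) (x : ℝ) :
    laguerreL (k+1) (α+1) x - laguerreL k (α+1) x = laguerreL (k+1) α x := by
  unfold laguerreL
  rw [Finset.sum_range_succ _ (k+1), Finset.sum_range_succ _ (k+1), add_sub_right_comm,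
    ← Finset.sum_sub_distrib]
  congr 1
  · apply Finset.sum_congr rfl
    intro i hi
    have hik : i ≤ k := Nat.lt_succ_iff.mp (Finset.mem_range.mp hi)
    obtain ⟨c, rfl⟩ : ∃ c, k = i + c := ⟨k - i, by omega⟩
    have h1 : i + c - i = c := by omega
    have h2 : i + c + 1 - i = c + 1 := by omega
    have h3 : (α + 1) + (i + c + 1) = ((α + 1) + (i + c)) + 1 := by omega
    have h4 : α + (i + c + 1) = (α + 1) + (i + c) := by omega
    have h5 : (α + 1) + i = (α + i) + 1 := by omega
    rw [h1, h2, h3, h4, h5]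
    rw [Nat.factorial_succ ((α+1)+(i+c)), Nat.factorial_succ c, Nat.factorial_succ (α+i)]
    push_cast
    have hc : ((c.factorial : ℝ)) ≠ 0 := Nat.cast_ne_zero.mpr (Nat.factorial_ne_zero c)
    have hai : (((α+i).factorial : ℝ)) ≠ 0 := Nat.cast_ne_zero.mpr (Nat.factorial_ne_zero _)
    have hi' : ((i.factorial : ℝ)) ≠ 0 := Nat.cast_ne_zero.mpr (Nat.factorial_ne_zero _)
    have hai1 : ((α:ℝ) + i + 1) ≠ 0 := by positivity
    have hc1 : ((c:ℝ) + 1) ≠ 0 := by positivity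
    field_simp
    ring
  · have h1 : k + 1 - (k + 1) = 0 := by omega
    have h2 : (α+1) + (k+1) = (α + (k+1)) + 1 := by omega
    rw [h1, h2, Nat.factorial_succ (α + (k+1))]
    push_cast
    have h3 : (((α+(k+1)).factorial : ℝ)) ≠ 0 := Nat.cast_ne_zero.mpr (Nat.factorial_ne_zero _)
    have h4 : ((α:ℝ) + (k+1) + 1) ≠ 0 := by positivity
    field_simp

lemma keyFDeriv (n : ℕ) (j : Fin n) (G : ℝ → ℝ) (G' : ℝ) (z : Cn n)
    (hG : HasDerivAt G G' (‖z‖^2)) :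
    pdx n j (fun w => ((G (‖w‖^2) : ℝ) : ℂ)) z = ((G' * (2 * (z j).re) : ℝ) : ℂ) ∧
    pdy n j (fun w => ((G (‖w‖^2) : ℝ) : ℂ)) z = ((G' * (2 * (z j).im) : ℝ) : ℂ) := by
  have h1 : HasFDerivAt (fun w : Cn n => ‖w‖^2) (2 • (innerSL ℝ z)) z :=
    (hasStrictFDerivAt_norm_sq z).hasFDerivAt
  have h2 : HasFDerivAt (fun w : Cn n => G (‖w‖^2)) (G' • (2 • (innerSL ℝ z))) z :=
    hG.comp_hasFDerivAt z h1
  have h3 : HasFDerivAt (fun w : Cn n => ((G (‖w‖^2) : ℝ) : ℂ))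
      (Complex.ofRealCLM.comp (G' • (2 • (innerSL ℝ z)))) z :=
    Complex.ofRealCLM.hasFDerivAt.comp z h2
  have key : ∀ c : ℂ, (inner ℝ z (EuclideanSpace.single j c) : ℝ) =
      ((starRingEnd ℂ) (z j) * c).re := by
    intro c
    simp [PiLp.inner_apply, EuclideanSpace.single_apply, apply_ite Complex.re,
      Finset.sum_ite_eq', Complex.mul_re]
    ring
  constructor
  · rw [pdx, h3.fderiv, ContinuousLinearMap.comp_apply, ContinuousLinearMap.smul_apply,
      ContinuousLinearMap.smul_apply, innerSL_apply_apply, key]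
    norm_num [smul_eq_mul]
  · rw [pdy, h3.fderiv, ContinuousLinearMap.comp_apply, ContinuousLinearMap.smul_apply,
      ContinuousLinearMap.smul_apply, innerSL_apply_apply, key]
    norm_num [smul_eq_mul]

/-- Derivative of the radial profile as a function of `s = ‖z‖²`. -/
lemma hasDerivAt_G (k ν : ℕ) (s : ℝ) :
    HasDerivAt (fun s => laguerreL (k+1) ν (s/2) * Real.exp (-s/4))
      (-(laguerreL k (ν+1) (s/2)) * (1/2) * Real.exp (-s/4) +
        laguerreL (k+1) ν (s/2) * (Real.exp (-s/4) * (-1/4))) s := by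
  have half : HasDerivAt (fun s : ℝ => s/2) (1/2) s := by
    simpa using (hasDerivAt_id s).div_const 2
  have lag : HasDerivAt (fun s : ℝ => laguerreL (k+1) ν (s/2))
      (-(laguerreL k (ν+1) (s/2)) * (1/2)) s := by
    have := (lagDeriv k ν (s/2)).comp s half; exact this
  have ex : HasDerivAt (fun s : ℝ => Real.exp (-s/4)) (Real.exp (-s/4) * (-1/4)) s := by
    have h : HasDerivAt (fun s : ℝ => -s/4) (-1/4) s := by
      simpa using ((hasDerivAt_id s).neg.div_const 4)
    exact h.exp
  exact lag.mul ex

lemma hasDerivAt_G0 (ν : ℕ) (s : ℝ) :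
    HasDerivAt (fun s => laguerreL 0 ν (s/2) * Real.exp (-s/4))
      (Real.exp (-s/4) * (-1/4)) s := by
  have he : (fun s : ℝ => laguerreL 0 ν (s/2) * Real.exp (-s/4)) =
      fun s : ℝ => Real.exp (-s/4) := by
    funext t; rw [laguerreL_zero', one_mul]
  rw [he]
  have h : HasDerivAt (fun s : ℝ => -s/4) (-1/4) s := by
    simpa using ((hasDerivAt_id s).neg.div_const 4)
  exact h.exp

lemma phi_as_G (n k ν : ℕ) :
    (fun w : Cn n => ((laguerreL k ν (‖w‖^2/2) * Real.exp (-‖w‖^2/4) : ℝ) : ℂ)) =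
      phiFn n k ν := rfl

end Aux

theorem stmt0 (n : ℕ) (hn : 2 ≤ n) :
    (∀ k : ℕ, 1 ≤ k → ∀ z : Cn n,
        ZtStar n ⟨0, by omega⟩ (phiFn n k (n - 1)) z =
          -(1 / 2 : ℂ) * z ⟨0, by omega⟩ * phiFn n (k - 1) n z) ∧
    (∀ z : Cn n, ZtStar n ⟨0, by omega⟩ (phiFn n 0 (n - 1)) z = 0) ∧
    (∀ k : ℕ, ∀ z : Cn n,
        Zt n ⟨1, by omega⟩ (phiFn n k (n - 1)) z =
          -(1 / 2 : ℂ) * (starRingEnd ℂ) (z ⟨1, by omega⟩) * phiFn n k n z) := by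
  have hν : n - 1 + 1 = n := by omega
  refine ⟨?_, ?_, ?_⟩
  · rintro (_|k) hk z
    · omega
    set j : Fin n := ⟨0, by omega⟩
    set s := ‖z‖^2 with hs
    have hG := hasDerivAt_G k (n-1) s
    have hd := keyFDeriv n j _ _ z hG
    rw [phi_as_G n (k+1) (n-1)] at hd
    rw [ZtStar, hd.1, hd.2]
    have hphi : phiFn n (k+1) (n-1) z =
        ((laguerreL (k+1) (n-1) (s/2) * Real.exp (-s/4) : ℝ) : ℂ) := rfl
    have hphi2 : phiFn n (k+1-1) n z =
        ((laguerreL k (n-1+1) (s/2) * Real.exp (-s/4) : ℝ) : ℂ) := by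
      rw [hν]; rfl
    obtain ⟨a, b, ha, hb, hz⟩ : ∃ a b : ℝ, (z j).re = a ∧ (z j).im = b ∧
        z j = (a : ℂ) + (b : ℂ) * Complex.I :=
      ⟨_, _, rfl, rfl, (Complex.re_add_im _).symm⟩
    rw [hphi, hphi2, ha, hb, hz]
    push_cast
    ring
  · intro z
    set j : Fin n := ⟨0, by omega⟩
    set s := ‖z‖^2 with hs
    have hG := hasDerivAt_G0 (n-1) s
    have hd := keyFDeriv n j _ _ z hG
    rw [phi_as_G n 0 (n-1)] at hd
    rw [ZtStar, hd.1, hd.2]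
    have hphi : phiFn n 0 (n-1) z =
        ((laguerreL 0 (n-1) (s/2) * Real.exp (-s/4) : ℝ) : ℂ) := rfl
    obtain ⟨a, b, ha, hb, hz⟩ : ∃ a b : ℝ, (z j).re = a ∧ (z j).im = b ∧
        z j = (a : ℂ) + (b : ℂ) * Complex.I :=
      ⟨_, _, rfl, rfl, (Complex.re_add_im _).symm⟩
    rw [hphi, laguerreL_zero', ha, hb, hz]
    push_cast
    ring
  · rintro (_|k) z
    · set j : Fin n := ⟨1, by omega⟩
      set s := ‖z‖^2 with hs
      have hG := hasDerivAt_G0 (n-1) s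
      have hd := keyFDeriv n j _ _ z hG
      rw [phi_as_G n 0 (n-1)] at hd
      rw [Zt, hd.1, hd.2]
      have hphi : phiFn n 0 (n-1) z =
          ((laguerreL 0 (n-1) (s/2) * Real.exp (-s/4) : ℝ) : ℂ) := rfl
      have hphi2 : phiFn n 0 n z =
          ((laguerreL 0 n (s/2) * Real.exp (-s/4) : ℝ) : ℂ) := rfl
      obtain ⟨a, b, ha, hb, hz⟩ : ∃ a b : ℝ, (z j).re = a ∧ (z j).im = b ∧
          z j = (a : ℂ) + (b : ℂ) * Complex.I :=
        ⟨_, _, rfl, rfl, (Complex.re_add_im _).symm⟩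
      rw [hphi, hphi2, laguerreL_zero', laguerreL_zero', ha, hb, hz]
      simp only [map_add, map_mul, Complex.conj_ofReal, Complex.conj_I]
      push_cast
      ring
    · set j : Fin n := ⟨1, by omega⟩
      set s := ‖z‖^2 with hs
      have hG := hasDerivAt_G k (n-1) s
      have hd := keyFDeriv n j _ _ z hG
      rw [phi_as_G n (k+1) (n-1)] at hd
      rw [Zt, hd.1, hd.2]
      have hstep := lagStep k (n-1) (s/2)
      have hphi : phiFn n (k+1) (n-1) z =
          ((laguerreL (k+1) (n-1) (s/2) * Real.exp (-s/4) : ℝ) : ℂ) := rfl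
      have hphi2 : phiFn n (k+1) n z =
          ((laguerreL (k+1) (n-1+1) (s/2) * Real.exp (-s/4) : ℝ) : ℂ) := by
        rw [hν]; rfl
      obtain ⟨a, b, ha, hb, hz⟩ : ∃ a b : ℝ, (z j).re = a ∧ (z j).im = b ∧
          z j = (a : ℂ) + (b : ℂ) * Complex.I :=
        ⟨_, _, rfl, rfl, (Complex.re_add_im _).symm⟩
      rw [hphi, hphi2, ← hstep, ha, hb, hz]
      simp only [map_add, map_mul, Complex.conj_ofReal, Complex.conj_I]
      push_cast
      ring
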